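/- For every n ∈ ℕ there exists a constant f'(n) = n·f(n) such that the following holds. Let G = (A, B) be a bipartite graph with A = {x_1,…,x_n}. Then there exists W ⊆ B with |W| ≤ f'(n) such that the induced bipartite graph G' = G[A, B \ W] satisfies: for all i, j, if d_G(x_i) > d_G(x_j) then d_G(x_i) − d_{G'}(x_i) > d_G(x_j) − d_{G'}(x_j). -/

import Mathlib

open Finset

/-- The "degree" of `i` computed from an atom-count vector `x`. -/
private def degA (n : ℕ) (i : Fin n) (x : Finset (Fin n) → ℕ) : ℕ :=
  ∑ S : Finset (Fin n), if i ∈ S then x S else 0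

/-- Key finite-dimensional lemma: there is a uniform bound `B` such that for every
atom-count vector `a` one can find `w ≤ a` with total sum at most `B` preserving all
strict degree comparisons. -/
private theorem exists_bound (n : ℕ) :
    ∃ B : ℕ, ∀ a : Finset (Fin n) → ℕ, ∃ w : Finset (Fin n) → ℕ,
      (∀ S, w S ≤ a S) ∧ (∑ S, w S ≤ B) ∧
      ∀ i j : Fin n, degA n j a < degA n i a → degA n j w < degA n i w := by
  classical
  have hpwo : ∀ s : Set (Finset (Fin n) → ℕ), s.IsPWO := fun s =>
    Set.isPWO_of_wellQuasiOrderedLE s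
  let Good : Finset (Fin n × Fin n) → (Finset (Fin n) → ℕ) → Prop :=
    fun P x => ∀ p ∈ P, degA n p.2 x < degA n p.1 x
  let M : Finset (Fin n × Fin n) → Set (Finset (Fin n) → ℕ) :=
    fun P => {x | Good P x ∧ ∀ y, Good P y → y ≤ x → y = x}
  have hMfin : ∀ P, (M P).Finite := by
    intro P
    refine IsAntichain.finite_of_partiallyWellOrderedOn ?_
      (hpwo (M P))
    intro x hx y hy hxy hle
    exact hxy (hy.2 x hx.1 hle)
  refine ⟨∑ P : Finset (Fin n × Fin n), ∑ x ∈ (hMfin P).toFinset, ∑ S, x S, ?_⟩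
  intro a
  set P : Finset (Fin n × Fin n) :=
    univ.filter (fun p : Fin n × Fin n => degA n p.2 a < degA n p.1 a) with hP
  set T : Set (Finset (Fin n) → ℕ) := {x | x ≤ a ∧ Good P x} with hT
  have haT : a ∈ T := by
    refine ⟨le_refl a, fun p hp => ?_⟩
    simpa [hP] using hp
  have hTwf : T.IsWF := (hpwo T).isWF
  have hTne : T.Nonempty := ⟨a, haT⟩
  set w : Finset (Fin n) → ℕ := hTwf.min hTne with hw
  have hwT : w ∈ T := hTwf.min_mem hTne
  have hwM : w ∈ M P := by
    refine ⟨hwT.2, fun y hy hyle => ?_⟩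
    by_contra hne
    have hylt : y < w := lt_of_le_of_ne hyle hne
    have hyT : y ∈ T := ⟨le_trans hyle hwT.1, hy⟩
    exact hTwf.not_lt_min hTne hyT hylt
  refine ⟨w, fun S => hwT.1 S, ?_, ?_⟩
  · calc ∑ S, w S ≤ ∑ x ∈ (hMfin P).toFinset, ∑ S, x S := by
          refine Finset.single_le_sum (f := fun x : Finset (Fin n) → ℕ => ∑ S, x S)
            (fun x _ => Nat.zero_le _) ?_
          simpa using hwM
      _ ≤ ∑ Q : Finset (Fin n × Fin n), ∑ x ∈ (hMfin Q).toFinset, ∑ S, x S := by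
          exact Finset.single_le_sum
            (f := fun Q => ∑ x ∈ (hMfin Q).toFinset, ∑ S, x S)
            (fun Q _ => Nat.zero_le _) (Finset.mem_univ P)
  · intro i j hij
    have hmem : (i, j) ∈ P := by simp [hP, hij]
    exact hwT.2 (i, j) hmem

theorem stmt_3 (n : ℕ) :
    ∃ f' : ℕ, ∀ (β : Type) (_ : Fintype β) (_ : DecidableEq β)
      (E : Fin n → β → Bool),
      ∃ W : Finset β, W.card ≤ f' ∧
        ∀ i j : Fin n,
          (univ.filter fun b => E j b).card < (univ.filter fun b => E i b).card →
          (W.filter fun b => E j b).card < (W.filter fun b => E i b).card := by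
  classical
  obtain ⟨B, hB⟩ := exists_bound n
  refine ⟨B, ?_⟩
  intro β _ _ E
  classical
  -- the "atom" of a vertex `b` : the set of its neighbours in `A`
  let φ : β → Finset (Fin n) := fun b => univ.filter (fun i => E i b)
  have hφ : ∀ b i, E i b ↔ i ∈ φ b := by
    intro b i; simp [φ]
  -- atom counts
  let a : Finset (Fin n) → ℕ := fun S => (univ.filter (fun b => φ b = S)).card
  obtain ⟨w, hwle, hwsum, hwdeg⟩ := hB a
  -- choose `w S` vertices from each atom
  have hchoose : ∀ S : Finset (Fin n),
      ∃ t : Finset β, t ⊆ univ.filter (fun b => φ b = S) ∧ t.card = w S := by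
    intro S
    exact Finset.exists_subset_card_eq (hwle S)
  choose WS hWSsub hWScard using hchoose
  set W : Finset β := univ.biUnion (fun S : Finset (Fin n) => WS S) with hW
  -- generic counting lemma: for any finset `u ⊆ β` with known per-atom intersections
  have key : ∀ (i : Fin n) (u : Finset β),
      (u.filter fun b => E i b).card
        = ∑ S : Finset (Fin n), if i ∈ S then (u.filter (fun b => φ b = S)).card else 0 := by
    intro i u
    have h1 : (u.filter fun b => E i b).card
        = ∑ S ∈ (univ : Finset (Finset (Fin n))),
            ((u.filter fun b => E i b).filter (fun b => φ b = S)).card := by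
      exact Finset.card_eq_sum_card_fiberwise (fun b _ => Finset.mem_univ _)
    rw [h1]
    refine Finset.sum_congr rfl ?_
    intro S _
    by_cases hiS : i ∈ S
    · simp only [hiS, if_true]
      congr 1
      rw [Finset.filter_filter]
      refine Finset.filter_congr ?_
      intro b _
      constructor
      · rintro ⟨_, h2⟩; exact h2
      · intro h2
        exact ⟨(hφ b i).mpr (by rw [h2]; exact hiS), h2⟩
    · simp only [hiS, if_false]
      rw [Finset.card_eq_zero, Finset.filter_filter, Finset.filter_eq_empty_iff]
      intro b _
      rintro ⟨hE, rfl⟩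
      exact hiS ((hφ b i).mp hE)
  -- per-atom intersections of W
  have hWatom : ∀ S : Finset (Fin n), W.filter (fun b => φ b = S) = WS S := by
    intro S
    ext b
    simp only [hW, Finset.mem_filter, Finset.mem_biUnion, Finset.mem_univ, true_and]
    constructor
    · rintro ⟨⟨S', hS'⟩, rfl⟩
      have := hWSsub S' hS'
      rw [Finset.mem_filter] at this
      rw [this.2]; exact hS'
    · intro hb
      have := hWSsub S hb
      rw [Finset.mem_filter] at this
      exact ⟨⟨S, hb⟩, this.2⟩
  have hdegW : ∀ i : Fin n, (W.filter fun b => E i b).card = degA n i w := by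
    intro i
    rw [key i W]
    unfold degA
    refine Finset.sum_congr rfl ?_
    intro S _
    rw [hWatom S, hWScard S]
  have hdegU : ∀ i : Fin n, ((univ : Finset β).filter fun b => E i b).card = degA n i a := by
    intro i
    rw [key i univ]
    rfl
  refine ⟨W, ?_, ?_⟩
  · have hcard : W.card ≤ ∑ S : Finset (Fin n), (WS S).card :=
      Finset.card_biUnion_le
    calc W.card ≤ ∑ S : Finset (Fin n), (WS S).card := hcard
      _ = ∑ S : Finset (Fin n), w S := by
          refine Finset.sum_congr rfl fun S _ => hWScard S
      _ ≤ B := hwsum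
  · intro i j hij
    rw [hdegU i, hdegU j] at hij
    rw [hdegW i, hdegW j]
    exact hwdeg i j hij
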